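/- Write l = αe + βf + v ∈ U ⊕ E₈(-1) with e² = f² = 0, (e,f) = 1, v ∈ E₈(-1), and l² = 2k > 0. If α ≠ β, α,β > √k and αβ < (5/4)k, then every root r = α'e + β'f + v' of U ⊕ E₈(-1) orthogonal to l (i.e., r² = -2 and (r,l) = 0) satisfies α' = β' = 0, so r ∈ E₈(-1). -/

import Mathlib

/-- The Cartan matrix of `E₈` (Dynkin diagram: chain 0–1–2–3–4–5–6 with node 7
attached to node 4); it is the Gram matrix of the positive definite root
lattice `E₈` in a basis of simple roots. -/
def E8Cartan : Matrix (Fin 8) (Fin 8) ℤ :=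
  !![ 2,-1, 0, 0, 0, 0, 0, 0;
     -1, 2,-1, 0, 0, 0, 0, 0;
      0,-1, 2,-1, 0, 0, 0, 0;
      0, 0,-1, 2,-1, 0, 0, 0;
      0, 0, 0,-1, 2,-1, 0,-1;
      0, 0, 0, 0,-1, 2,-1, 0;
      0, 0, 0, 0, 0,-1, 2, 0;
      0, 0, 0, 0,-1, 0, 0, 2]

/-- The bilinear form of the lattice `U ⊕ E₈(-1)`, on elements written as
`αe + βf + v` with `e² = f² = 0`, `(e,f) = 1`, `v ∈ E₈(-1)`. -/
def UE8form (x y : ℤ × ℤ × (Fin 8 → ℤ)) : ℤ :=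
  x.1 * y.2.1 + x.2.1 * y.1 - dotProduct x.2.2 (E8Cartan.mulVec y.2.2)

lemma Bexp (x y : Fin 8 → ℤ) : dotProduct x (E8Cartan.mulVec y) =
    2*(x 0*y 0 + x 1*y 1 + x 2*y 2 + x 3*y 3 + x 4*y 4 + x 5*y 5 + x 6*y 6 + x 7*y 7)
    - (x 0*y 1 + x 1*y 0 + x 1*y 2 + x 2*y 1 + x 2*y 3 + x 3*y 2 + x 3*y 4 + x 4*y 3
       + x 4*y 5 + x 5*y 4 + x 5*y 6 + x 6*y 5 + x 4*y 7 + x 7*y 4) := by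
  simp only [dotProduct, Matrix.mulVec, Fin.sum_univ_eight, show E8Cartan 0 0 = 2 from rfl, show E8Cartan 0 1 = -1 from rfl, show E8Cartan 0 2 = 0 from rfl, show E8Cartan 0 3 = 0 from rfl, show E8Cartan 0 4 = 0 from rfl, show E8Cartan 0 5 = 0 from rfl, show E8Cartan 0 6 = 0 from rfl, show E8Cartan 0 7 = 0 from rfl, show E8Cartan 1 0 = -1 from rfl, show E8Cartan 1 1 = 2 from rfl, show E8Cartan 1 2 = -1 from rfl, show E8Cartan 1 3 = 0 from rfl, show E8Cartan 1 4 = 0 from rfl, show E8Cartan 1 5 = 0 from rfl, show E8Cartan 1 6 = 0 from rfl, show E8Cartan 1 7 = 0 from rfl, show E8Cartan 2 0 = 0 from rfl, show E8Cartan 2 1 = -1 from rfl, show E8Cartan 2 2 = 2 from rfl, show E8Cartan 2 3 = -1 from rfl, show E8Cartan 2 4 = 0 from rfl, show E8Cartan 2 5 = 0 from rfl, show E8Cartan 2 6 = 0 from rfl, show E8Cartan 2 7 = 0 from rfl, show E8Cartan 3 0 = 0 from rfl, show E8Cartan 3 1 = 0 from rfl, show E8Cartan 3 2 = -1 from rfl,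 show E8Cartan 3 3 = 2 from rfl, show E8Cartan 3 4 = -1 from rfl, show E8Cartan 3 5 = 0 from rfl, show E8Cartan 3 6 = 0 from rfl, show E8Cartan 3 7 = 0 from rfl, show E8Cartan 4 0 = 0 from rfl, show E8Cartan 4 1 = 0 from rfl, show E8Cartan 4 2 = 0 from rfl, show E8Cartan 4 3 = -1 from rfl, show E8Cartan 4 4 = 2 from rfl, show E8Cartan 4 5 = -1 from rfl, show E8Cartan 4 6 = 0 from rfl, show E8Cartan 4 7 = -1 from rfl, show E8Cartan 5 0 = 0 from rfl, show E8Cartan 5 1 = 0 from rfl, show E8Cartan 5 2 = 0 from rfl, show E8Cartan 5 3 = 0 from rfl, show E8Cartan 5 4 = -1 from rfl, show E8Cartan 5 5 = 2 from rfl, show E8Cartan 5 6 = -1 from rfl, show E8Cartan 5 7 = 0 from rfl, show E8Cartan 6 0 = 0 from rfl, show E8Cartan 6 1 = 0 from rfl, show E8Cartan 6 2 = 0 from rfl, show E8Cartan 6 3 = 0 from rfl, show E8Cartan 6 4 = 0 from rfl, show E8Cartan 6 5 = -1 from rfl, show E8Cartan 6 6 = 2 from rfl, show E8Cartan 6 7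 = 0 from rfl, show E8Cartan 7 0 = 0 from rfl, show E8Cartan 7 1 = 0 from rfl, show E8Cartan 7 2 = 0 from rfl, show E8Cartan 7 3 = 0 from rfl, show E8Cartan 7 4 = -1 from rfl, show E8Cartan 7 5 = 0 from rfl, show E8Cartan 7 6 = 0 from rfl, show E8Cartan 7 7 = 2 from rfl]
  ring

/-- Positive semidefiniteness of the E₈ Cartan form, via an explicit
sum-of-squares certificate (scaled Cholesky/LDL decomposition). -/
lemma Qnn (w : Fin 8 → ℤ) : 0 ≤ dotProduct w (E8Cartan.mulVec w) := by
  have key : 840 * dotProduct w (E8Cartan.mulVec w) =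
      420*(2*w 0 - w 1)^2 + 140*(3*w 1 - 2*w 2)^2 + 70*(4*w 2 - 3*w 3)^2
      + 42*(5*w 3 - 4*w 4)^2 + 28*(6*w 4 - 5*w 5 - 5*w 7)^2
      + 20*(7*w 5 - 6*w 6 - 5*w 7)^2 + 15*(8*w 6 - 5*w 7)^2 + 105*(w 7)^2 := by
    rw [Bexp]; ring
  nlinarith [sq_nonneg (2*w 0 - w 1), sq_nonneg (3*w 1 - 2*w 2), sq_nonneg (4*w 2 - 3*w 3),
    sq_nonneg (5*w 3 - 4*w 4), sq_nonneg (6*w 4 - 5*w 5 - 5*w 7),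
    sq_nonneg (7*w 5 - 6*w 6 - 5*w 7), sq_nonneg (8*w 6 - 5*w 7), sq_nonneg (w 7)]

/-- Bilinear expansion of the quadratic form on an integer combination. -/
lemma Qcomb (c d : ℤ) (x y : Fin 8 → ℤ) :
    dotProduct (fun i => c * x i - d * y i)
      (E8Cartan.mulVec (fun i => c * x i - d * y i)) =
    c^2 * dotProduct x (E8Cartan.mulVec x)
    - 2*c*d * dotProduct x (E8Cartan.mulVec y)
    + d^2 * dotProduct y (E8Cartan.mulVec y) := by
  rw [Bexp, Bexp, Bexp, Bexp]; ring

/-- Cauchy–Schwarz for the E₈ Cartan form. -/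
lemma csE8 (x y : Fin 8 → ℤ) (hy : 0 < dotProduct y (E8Cartan.mulVec y)) :
    (dotProduct x (E8Cartan.mulVec y))^2 ≤
      dotProduct x (E8Cartan.mulVec x) * dotProduct y (E8Cartan.mulVec y) := by
  set Qx := dotProduct x (E8Cartan.mulVec x) with hQx
  set Qy := dotProduct y (E8Cartan.mulVec y) with hQy
  set B := dotProduct x (E8Cartan.mulVec y) with hB
  have h := Qnn (fun i => Qy * x i - B * y i)
  rw [Qcomb Qy B x y] at h
  rw [← hQx, ← hQy, ← hB] at h
  nlinarith [h, hy]

set_option maxHeartbeats 1000000 in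
/-- Let `l = αe + βf + v ∈ U ⊕ E₈(-1)` with `l² = 2k > 0`.
If `α ≠ β`, `α, β > √k` and `αβ < (5/4)k`, then every root
`r = α'e + β'f + v'` of `U ⊕ E₈(-1)` orthogonal to `l` (i.e. `r² = -2`,
`(r,l) = 0`) satisfies `α' = β' = 0`, hence lies in `E₈(-1)`. -/
theorem stmt11 (k : ℤ) (hk : 0 < k)
    (α β : ℤ) (v : Fin 8 → ℤ)
    (hl2 : UE8form (α, β, v) (α, β, v) = 2 * k)
    (hαβ : α ≠ β)
    (hα : Real.sqrt (k : ℝ) < (α : ℝ))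
    (hβ : Real.sqrt (k : ℝ) < (β : ℝ))
    (hprod : (α * β : ℝ) < 5 / 4 * (k : ℝ))
    (α' β' : ℤ) (v' : Fin 8 → ℤ)
    (hroot : UE8form (α', β', v') (α', β', v') = -2)
    (horth : UE8form (α', β', v') (α, β, v) = 0) :
    α' = 0 ∧ β' = 0 := by
  simp only [UE8form] at hl2 hroot horth
  -- real to integer conversions
  have hk0 : (0:ℝ) ≤ (k:ℝ) := by exact_mod_cast hk.le
  have hs : Real.sqrt (k:ℝ) ^ 2 = (k:ℝ) := Real.sq_sqrt hk0
  have hsnn : (0:ℝ) ≤ Real.sqrt (k:ℝ) := Real.sqrt_nonneg _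
  have hαpos : 0 < α := by exact_mod_cast lt_of_le_of_lt hsnn hα
  have hβpos : 0 < β := by exact_mod_cast lt_of_le_of_lt hsnn hβ
  have hkαβ : k < α * β := by
    have : (k:ℝ) < (α:ℝ) * (β:ℝ) := by nlinarith
    exact_mod_cast this
  have hkα2 : k < α ^ 2 := by
    have : (k:ℝ) < (α:ℝ) ^ 2 := by nlinarith
    exact_mod_cast this
  have hkβ2 : k < β ^ 2 := by
    have : (k:ℝ) < (β:ℝ) ^ 2 := by nlinarith
    exact_mod_cast this
  have h45 : 4 * (α * β) < 5 * k := by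
    have : (4:ℝ) * ((α:ℝ) * (β:ℝ)) < 5 * (k:ℝ) := by linarith
    exact_mod_cast this
  -- form values
  have hQv : dotProduct v (E8Cartan.mulVec v) = 2*(α*β) - 2*k := by linarith
  have hQv' : dotProduct v' (E8Cartan.mulVec v') = 2*(α'*β') + 2 := by linarith
  have hBvv : dotProduct v' (E8Cartan.mulVec v) = α'*β + β'*α := by linarith
  have hQvpos : 0 < dotProduct v (E8Cartan.mulVec v) := by rw [hQv]; linarith
  have hcs := csE8 v' v hQvpos
  rw [hQv, hQv', hBvv] at hcs
  have hnn := Qnn v'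
  rw [hQv'] at hnn
  clear hl2 hroot horth hQv hQv' hBvv hQvpos hα hβ hprod hs hsnn hk0
  clear v v'
  -- now pure integer arithmetic
  set a := α' with ha
  set b := β' with hb
  rcases lt_trichotomy (a*b) 0 with hab | hab | hab
  · -- a*b = -1 case
    exfalso
    have habm : a * b = -1 := by omega
    rw [habm] at hcs
    have hz : a*β + b*α = 0 := by nlinarith [sq_nonneg (a*β + b*α)]
    have ha1 : a = 1 ∨ a = -1 := by
      have : a ∣ 1 := ⟨-b, by linarith [habm]⟩
      exact Int.isUnit_iff.mp (isUnit_of_dvd_one this)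
    rcases ha1 with h1 | h1
    · have : b = -1 := by rw [h1] at habm; linarith
      rw [h1, this] at hz
      apply hαβ; linarith
    · have : b = 1 := by rw [h1] at habm; linarith
      rw [h1, this] at hz
      apply hαβ; linarith
  · -- a*b = 0 case
    rcases mul_eq_zero.mp hab with h0 | h0
    · refine ⟨h0, ?_⟩
      by_contra hbne
      have hb1 : 1 ≤ b^2 := by
        have := Int.one_le_abs (by simpa using hbne)
        nlinarith [sq_abs b]
      rw [h0] at hcs
      nlinarith [mul_le_mul_of_nonneg_right hb1 (sq_nonneg α), hcs, hkα2, h45, hk]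
    · refine ⟨?_, h0⟩
      by_contra hane
      have ha1 : 1 ≤ a^2 := by
        have := Int.one_le_abs (by simpa using hane)
        nlinarith [sq_abs a]
      rw [h0] at hcs
      nlinarith [mul_le_mul_of_nonneg_right ha1 (sq_nonneg β), hcs, hkβ2, h45, hk]
  · -- a*b ≥ 1 case
    exfalso
    have hab1 : 1 ≤ a*b := by linarith
    nlinarith [sq_nonneg (a*β - b*α), mul_le_mul_of_nonneg_right hab1 hk.le, hcs, h45, hk]
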